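/- In the setup below, the group Φ = {φ_ξ : ξ ∈ F \ {0}} acts transitively on the idempotents of J other than 0 and 1_J: for any u, v ∈ J with u·u = u, v·v = v, u ∉ {0, 1_J} and v ∉ {0, 1_J}, there exists ξ ∈ F \ {0} with φ_ξ(u) = v. -/

import Mathlib

namespace JordanHalf

variable {F : Type*} [Field F] {A : Type*} [AddCommGroup A] [Module F A]

/-- The `lam`-eigenspace of the adjoint map `ad_a` for the bilinear multiplication `mul`. -/
def eig (mul : A →ₗ[F] A →ₗ[F] A) (a : A) (lam : F) : Submodule F A :=
  Module.End.eigenspace (mul a) lam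

/-- `a` is a primitive axis of Jordan type `1/2` for the multiplication `mul`. -/
def IsPrimitiveAxis (mul : A →ₗ[F] A →ₗ[F] A) (a : A) : Prop :=
  mul a a = a ∧
  (eig mul a 1 ⊔ eig mul a 0 ⊔ eig mul a (2⁻¹ : F) = ⊤) ∧
  eig mul a 1 = Submodule.span F {a} ∧
  (∀ x ∈ eig mul a 1, ∀ y ∈ eig mul a 0, mul x y = 0) ∧
  (∀ x ∈ eig mul a 0, ∀ y ∈ eig mul a 0, mul x y ∈ eig mul a 0) ∧
  (∀ x ∈ eig mul a 1, ∀ y ∈ eig mul a (2⁻¹ : F), mul x y ∈ eig mul a (2⁻¹ : F)) ∧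
  (∀ x ∈ eig mul a 0, ∀ y ∈ eig mul a (2⁻¹ : F), mul x y ∈ eig mul a (2⁻¹ : F)) ∧
  (∀ x ∈ eig mul a (2⁻¹ : F), ∀ y ∈ eig mul a (2⁻¹ : F),
    mul x y ∈ eig mul a 1 ⊔ eig mul a 0)

/-- The subalgebra (as a submodule closed under `mul`) generated by a set `S`. -/
def genBy (mul : A →ₗ[F] A →ₗ[F] A) (S : Set A) : Submodule F A :=
  sInf {P : Submodule F A | S ⊆ P ∧ ∀ x ∈ P, ∀ y ∈ P, mul x y ∈ P}

end JordanHalf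

open JordanHalf


private 
theorem exists_phi {F : Type*} [Field F] {A : Type*} [AddCommGroup A] [Module F A]
    (g : ℤ → Submodule F A)
    (hbot : ∀ n : ℤ, n ≠ -2 → n ≠ -1 → n ≠ 0 → n ≠ 1 → n ≠ 2 → g n = ⊥)
    (hgsum : ∀ u : A, ∃ xm2 ∈ g (-2), ∃ xm1 ∈ g (-1), ∃ x0 ∈ g 0, ∃ x1 ∈ g 1,
      ∃ x2 ∈ g 2, u = xm2 + xm1 + x0 + x1 + x2)
    (hgind : ∀ xm2 ∈ g (-2), ∀ xm1 ∈ g (-1), ∀ x0 ∈ g 0, ∀ x1 ∈ g 1, ∀ x2 ∈ g 2,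
      xm2 + xm1 + x0 + x1 + x2 = 0 →
        xm2 = 0 ∧ xm1 = 0 ∧ x0 = 0 ∧ x1 = 0 ∧ x2 = 0)
    (ξ : F) :
    ∃ φ : A →ₗ[F] A, ∀ n : ℤ, ∀ x ∈ g n, φ x = ξ ^ n • x := by
  classical
  set S : (g (-2) × (g (-1) × (g 0 × (g 1 × g 2)))) →ₗ[F] A :=
    (g (-2)).subtype.coprod ((g (-1)).subtype.coprod ((g 0).subtype.coprod
      ((g 1).subtype.coprod (g 2).subtype))) with hS
  have hSapp : ∀ p : (g (-2) × (g (-1) × (g 0 × (g 1 × g 2)))),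
      S p = (p.1 : A) + p.2.1 + p.2.2.1 + p.2.2.2.1 + p.2.2.2.2 := by
    intro p
    simp only [hS, LinearMap.coprod_apply, Submodule.coe_subtype]
    abel
  have hinj : Function.Injective S := by
    rw [← LinearMap.ker_eq_bot, eq_bot_iff]
    rintro ⟨x2, x1, x0, y1, y2⟩ hm
    rw [LinearMap.mem_ker, hSapp] at hm
    obtain ⟨h1, h2, h3, h4, h5⟩ := hgind _ x2.2 _ x1.2 _ x0.2 _ y1.2 _ y2.2 hm
    simp only [Submodule.mem_bot, Prod.mk_eq_zero]
    exact ⟨Subtype.ext h1, Subtype.ext h2, Subtype.ext h3, Subtype.ext h4, Subtype.ext h5⟩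
  have hsurj : Function.Surjective S := by
    intro u
    obtain ⟨xm2, h2, xm1, h1, x0, h0, x1, i1, x2, i2, rfl⟩ := hgsum u
    exact ⟨⟨⟨xm2, h2⟩, ⟨xm1, h1⟩, ⟨x0, h0⟩, ⟨x1, i1⟩, ⟨x2, i2⟩⟩, by rw [hSapp]⟩
  set e := LinearEquiv.ofBijective S (show Function.Bijective S from ⟨hinj, hsurj⟩) with he
  set ψ : (g (-2) × (g (-1) × (g 0 × (g 1 × g 2)))) →ₗ[F]
      (g (-2) × (g (-1) × (g 0 × (g 1 × g 2)))) :=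
    LinearMap.prodMap ((ξ ^ (-2 : ℤ)) • LinearMap.id)
      (LinearMap.prodMap ((ξ ^ (-1 : ℤ)) • LinearMap.id)
        (LinearMap.prodMap ((ξ ^ (0 : ℤ)) • LinearMap.id)
          (LinearMap.prodMap ((ξ ^ (1 : ℤ)) • LinearMap.id)
            ((ξ ^ (2 : ℤ)) • LinearMap.id)))) with hψ
  refine ⟨S ∘ₗ ψ ∘ₗ (e.symm : A →ₗ[F] _), ?_⟩
  intro n x hx
  have key : ∀ p, S p = x → S (ψ (e.symm x)) = S (ψ p) := by
    intro p hp
    have : e.symm x = p := by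
      rw [LinearEquiv.symm_apply_eq, he, LinearEquiv.ofBijective_apply, hp]
    rw [this]
  show S (ψ (e.symm x)) = ξ ^ n • x
  by_cases h2 : n = -2
  · subst h2
    rw [key (⟨⟨x, hx⟩, 0, 0, 0, 0⟩) (by rw [hSapp]; simp)]
    rw [hψ]
    rw [hSapp]
    simp
  · by_cases h1 : n = -1
    · subst h1
      rw [key (⟨0, ⟨x, hx⟩, 0, 0, 0⟩) (by rw [hSapp]; simp)]
      rw [hψ, hSapp]; simp
    · by_cases h0 : n = 0
      · subst h0
        rw [key (⟨0, 0, ⟨x, hx⟩, 0, 0⟩) (by rw [hSapp]; simp)]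
        rw [hψ, hSapp]; simp
      · by_cases hp1 : n = 1
        · subst hp1
          rw [key (⟨0, 0, 0, ⟨x, hx⟩, 0⟩) (by rw [hSapp]; simp)]
          rw [hψ, hSapp]; simp
        · by_cases hp2 : n = 2
          · subst hp2
            rw [key (⟨0, 0, 0, 0, ⟨x, hx⟩⟩) (by rw [hSapp]; simp)]
            rw [hψ, hSapp]; simp
          · rw [hbot n h2 h1 h0 hp1 hp2] at hx
            rw [Submodule.mem_bot] at hx
            subst hx
            simp

/-- **Proposition (transitivity).** In the setup of Section 5 of the paper, the group
`Φ = {φ_ξ : ξ ∈ F \ {0}}` of graded automorphisms acts transitively on the idempotents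
of `J = ⟨⟨a,b⟩⟩` other than `0` and `1_J`. -/
theorem Phi_transitive_on_idempotents
    {F : Type*} [Field F] [IsAlgClosed F] (hchar : (2 : F) ≠ 0)
    {A : Type*} [AddCommGroup A] [Module F A]
    (mul : A →ₗ[F] A →ₗ[F] A) (hcomm : ∀ u v : A, mul u v = mul v u)
    (hgen : ∃ X : Set A, (∀ x ∈ X, IsPrimitiveAxis mul x) ∧ genBy mul X = ⊤)
    (B : A →ₗ[F] A →ₗ[F] F) (hBne : B ≠ 0)
    (hBsymm : ∀ u v : A, B u v = B v u)
    (hBfrob : ∀ u v w : A, B (mul u v) w = B u (mul v w))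
    (hBnorm : ∀ c : A, IsPrimitiveAxis mul c → B c c = 1)
    (a b : A) (ha : IsPrimitiveAxis mul a) (hb : IsPrimitiveAxis mul b)
    (hα0 : B a b ≠ 0) (hα14 : B a b ≠ (4⁻¹ : F)) (hα1 : B a b ≠ 1)
    -- the subalgebra `J = ⟨⟨a,b⟩⟩` is 3-dimensional with basis `a, b, a⬝b`,
    -- has an identity element `oneJ`, and the Frobenius form is nondegenerate on it
    (hJspan : genBy mul {a, b} = Submodule.span F {a, b, mul a b})
    (hJind : LinearIndependent F ![a, b, mul a b])
    (oneJ : A) (honeJ : oneJ ∈ genBy mul {a, b})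
    (honemul : ∀ x ∈ genBy mul {a, b}, mul oneJ x = x)
    (hnondeg : ∀ x ∈ genBy mul {a, b}, (∀ y ∈ genBy mul {a, b}, B x y = 0) → x = 0)
    -- `ζ` is a root of `x² − (4α−2)x + 1` and `s`, `t` are the nilpotent elements of `J`
    (ζ : F) (hζ : ζ ^ 2 - (4 * B a b - 2) * ζ + 1 = 0)
    (s t : A)
    (hs : s = (4 * (B a b - 1))⁻¹ •
      ((-(1 + ζ) / 4) • a + mul a b + (-(1 + ζ⁻¹) / 4) • b))
    (ht : t = (B a b * (B a b - 1))⁻¹ •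
      ((-(1 + ζ⁻¹) / 4) • a + mul a b + (-(1 + ζ) / 4) • b))
    -- `W = J^⊥`, so that `A = J ⊕ W` and `W⬝J ⊆ W`
    (W : Submodule F A) (hW : ∀ w : A, w ∈ W ↔ ∀ x ∈ genBy mul {a, b}, B w x = 0)
    (hcompl : IsCompl (genBy mul {a, b}) W)
    (hWJ : ∀ w ∈ W, ∀ x ∈ genBy mul {a, b}, mul w x ∈ W)
    -- the Miyamoto involutions `τa`, `τb` of the axes `a`, `b`
    (τa : A →ₗ[F] A)
    (hτa1 : ∀ x ∈ eig mul a 1, τa x = x) (hτa0 : ∀ x ∈ eig mul a 0, τa x = x)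
    (hτah : ∀ x ∈ eig mul a (2⁻¹ : F), τa x = -x)
    (hτamul : ∀ u v : A, τa (mul u v) = mul (τa u) (τa v))
    (τb : A →ₗ[F] A)
    (hτb1 : ∀ x ∈ eig mul b 1, τb x = x) (hτb0 : ∀ x ∈ eig mul b 0, τb x = x)
    (hτbh : ∀ x ∈ eig mul b (2⁻¹ : F), τb x = -x)
    (hτbmul : ∀ u v : A, τb (mul u v) = mul (τb u) (τb v))
    -- the grading of `A`
    (g : ℤ → Submodule F A)
    (hg : ∀ k : ℤ, g k =
      if k = -2 then Submodule.span F {s}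
      else if k = -1 then Submodule.map (mul s) W
      else if k = 0 then Submodule.span F {oneJ} ⊔
        (W ⊓ LinearMap.ker (mul s) ⊓ LinearMap.ker (mul t))
      else if k = 1 then Submodule.map (mul t) W
      else if k = 2 then Submodule.span F {t}
      else ⊥)
    -- \`A\` is the internal direct sum of the graded components, and the grading is
    -- multiplicative
    (hgsum : ∀ u : A, ∃ xm2 ∈ g (-2), ∃ xm1 ∈ g (-1), ∃ x0 ∈ g 0, ∃ x1 ∈ g 1,
      ∃ x2 ∈ g 2, u = xm2 + xm1 + x0 + x1 + x2)
    (hgind : ∀ xm2 ∈ g (-2), ∀ xm1 ∈ g (-1), ∀ x0 ∈ g 0, ∀ x1 ∈ g 1, ∀ x2 ∈ g 2,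
      xm2 + xm1 + x0 + x1 + x2 = 0 →
        xm2 = 0 ∧ xm1 = 0 ∧ x0 = 0 ∧ x1 = 0 ∧ x2 = 0)
    (hgmul : ∀ n m : ℤ, ∀ x ∈ g n, ∀ y ∈ g m, mul x y ∈ g (n + m)) :
    ∀ u ∈ genBy mul {a, b}, ∀ v ∈ genBy mul {a, b},
      mul u u = u → mul v v = v → u ≠ 0 → u ≠ oneJ → v ≠ 0 → v ≠ oneJ →
      ∃ ξ : F, ξ ≠ 0 ∧ ∃ φ : A →ₗ[F] A,
        (∀ n : ℤ, ∀ x ∈ g n, φ x = ξ ^ n • x) ∧ φ u = v := by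
  intro u huJ v hvJ huu hvv hu0 hu1 hv0 hv1
  classical
  -- basic memberships in J
  have haJ : a ∈ genBy mul {a, b} := Submodule.mem_sInf.2 fun P hP => hP.1 (by simp)
  have hbJ : b ∈ genBy mul {a, b} := Submodule.mem_sInf.2 fun P hP => hP.1 (by simp)
  have hJmul : ∀ x ∈ genBy mul {a, b}, ∀ y ∈ genBy mul {a, b},
      mul x y ∈ genBy mul {a, b} := by
    intro x hx y hy
    exact Submodule.mem_sInf.2 fun P hP =>
      hP.2 x (Submodule.mem_sInf.1 hx P hP) y (Submodule.mem_sInf.1 hy P hP)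
  have habJ : mul a b ∈ genBy mul {a, b} := hJmul a haJ b hbJ
  have hsJ : s ∈ genBy mul {a, b} := by
    rw [hs]
    exact Submodule.smul_mem _ _ (Submodule.add_mem _ (Submodule.add_mem _
      (Submodule.smul_mem _ _ haJ) habJ) (Submodule.smul_mem _ _ hbJ))
  have htJ : t ∈ genBy mul {a, b} := by
    rw [ht]
    exact Submodule.smul_mem _ _ (Submodule.add_mem _ (Submodule.add_mem _
      (Submodule.smul_mem _ _ haJ) habJ) (Submodule.smul_mem _ _ hbJ))
  -- scalar facts
  have h4 : (4 : F) ≠ 0 := by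
    intro h
    apply hchar
    have h22 : (2 : F) * 2 = 0 := by rw [show (2 : F) * 2 = 4 by norm_num]; exact h
    exact mul_self_eq_zero.mp h22
  have h8 : (8 : F) ≠ 0 := by
    intro h
    apply hchar
    have h24 : (2 : F) * 4 = 0 := by rw [show (2 : F) * 4 = 8 by norm_num]; exact h
    rcases mul_eq_zero.mp h24 with h' | h'
    · exact h'
    · exact absurd h' h4
  have ha1 : B a b - 1 ≠ 0 := sub_ne_zero.mpr hα1
  have haNe : a ≠ 0 := by
    intro h; apply hα0; rw [h]; simp
  have honeNe : oneJ ≠ 0 := by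
    intro h
    apply haNe
    have h' := honemul a haJ
    rw [h] at h'
    simpa using h'.symm
  -- s ≠ 0 and t ≠ 0
  have hsNe : s ≠ 0 := by
    intro h
    rw [hs] at h
    rcases smul_eq_zero.mp h with h' | h'
    · exact (inv_ne_zero (mul_ne_zero h4 ha1)) h'
    · have h'' : ∑ i : Fin 3, (![(-(1 + ζ) / 4), (-(1 + ζ⁻¹) / 4), (1 : F)] i) •
          (![a, b, mul a b] i) = 0 := by
        rw [Fin.sum_univ_three]
        simp only [Matrix.cons_val_zero, Matrix.cons_val_one, Matrix.head_cons,
          Matrix.cons_val_two, Matrix.tail_cons, one_smul]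
        rw [← h']
        abel
      have h3 := Fintype.linearIndependent_iff.mp hJind _ h'' 2
      exact one_ne_zero (α := F) (by simpa using h3)
  have htNe : t ≠ 0 := by
    intro h
    rw [ht] at h
    rcases smul_eq_zero.mp h with h' | h'
    · exact (inv_ne_zero (mul_ne_zero hα0 ha1)) h'
    · have h'' : ∑ i : Fin 3, (![(-(1 + ζ⁻¹) / 4), (-(1 + ζ) / 4), (1 : F)] i) •
          (![a, b, mul a b] i) = 0 := by
        rw [Fin.sum_univ_three]
        simp only [Matrix.cons_val_zero, Matrix.cons_val_one, Matrix.head_cons,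
          Matrix.cons_val_two, Matrix.tail_cons, one_smul]
        rw [← h']
        abel
      have h3 := Fintype.linearIndependent_iff.mp hJind _ h'' 2
      exact one_ne_zero (α := F) (by simpa using h3)
  -- grading components
  have hgm2 : g (-2) = Submodule.span F {s} := by rw [hg]; norm_num
  have hg2' : g 2 = Submodule.span F {t} := by rw [hg]; norm_num
  have hg0' : g 0 = Submodule.span F {oneJ} ⊔
      (W ⊓ LinearMap.ker (mul s) ⊓ LinearMap.ker (mul t)) := by rw [hg]; norm_num
  have hgm1 : g (-1) = Submodule.map (mul s) W := by rw [hg]; norm_num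
  have hg1' : g 1 = Submodule.map (mul t) W := by rw [hg]; norm_num
  have hsmem : s ∈ g (-2) := by rw [hgm2]; exact Submodule.mem_span_singleton_self s
  have htmem : t ∈ g 2 := by rw [hg2']; exact Submodule.mem_span_singleton_self t
  have h1mem : oneJ ∈ g 0 := by
    rw [hg0']; exact Submodule.mem_sup_left (Submodule.mem_span_singleton_self _)
  have hbot : ∀ n : ℤ, n ≠ -2 → n ≠ -1 → n ≠ 0 → n ≠ 1 → n ≠ 2 → g n = ⊥ := by
    intro n h1 h2 h3 h4' h5; rw [hg]; simp [h1, h2, h3, h4', h5]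
  -- products
  have hss : mul s s = 0 := by
    have h := hgmul (-2) (-2) s hsmem s hsmem
    norm_num at h
    rw [hbot (-4) (by decide) (by decide) (by decide) (by decide) (by decide)] at h
    simpa using h
  have htt : mul t t = 0 := by
    have h := hgmul 2 2 t htmem t htmem
    norm_num at h
    rw [hbot 4 (by decide) (by decide) (by decide) (by decide) (by decide)] at h
    simpa using h
  have hst0 : mul s t ∈ g 0 := by
    have h := hgmul (-2) 2 s hsmem t htmem
    norm_num at h
    exact h
  have h1s : mul oneJ s = s := honemul s hsJ
  have hs1 : mul s oneJ = s := by rw [hcomm]; exact h1s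
  have h1t : mul oneJ t = t := honemul t htJ
  have ht1 : mul t oneJ = t := by rw [hcomm]; exact h1t
  have h11 : mul oneJ oneJ = oneJ := honemul oneJ honeJ
  -- independence of s, oneJ, t
  have hindJ : ∀ p q r : F, p • s + q • oneJ + r • t = 0 → p = 0 ∧ q = 0 ∧ r = 0 := by
    intro p q r h
    obtain ⟨e1, _, e3, _, e5⟩ := hgind (p • s) (Submodule.smul_mem _ _ hsmem)
      0 (zero_mem _) (q • oneJ) (Submodule.smul_mem _ _ h1mem)
      0 (zero_mem _) (r • t) (Submodule.smul_mem _ _ htmem)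
      (by rw [show p • s + 0 + q • oneJ + 0 + r • t = p • s + q • oneJ + r • t from by abel,
        h])
    refine ⟨?_, ?_, ?_⟩
    · rcases smul_eq_zero.mp e1 with h' | h'
      · exact h'
      · exact absurd h' hsNe
    · rcases smul_eq_zero.mp e3 with h' | h'
      · exact h'
      · exact absurd h' honeNe
    · rcases smul_eq_zero.mp e5 with h' | h'
      · exact h'
      · exact absurd h' htNe
  -- decomposition of elements of J
  have hJW : ∀ x, x ∈ genBy mul {a, b} → x ∈ W → x = 0 := fun x hx hw =>
    Submodule.disjoint_def.mp hcompl.disjoint x hx hw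
  have hdecJ : ∀ x ∈ genBy mul {a, b}, ∃ p q r : F, x = p • s + q • oneJ + r • t := by
    intro x hx
    obtain ⟨xm2, hm2, xm1, hm1, x0, h0, x1, h1', x2, h2', hxeq⟩ := hgsum x
    rw [hgm2] at hm2
    obtain ⟨p, rfl⟩ := Submodule.mem_span_singleton.mp hm2
    rw [hg2'] at h2'
    obtain ⟨r, rfl⟩ := Submodule.mem_span_singleton.mp h2'
    rw [hg0'] at h0
    obtain ⟨y, hy, z, hz, rfl⟩ := Submodule.mem_sup.mp h0
    obtain ⟨q, rfl⟩ := Submodule.mem_span_singleton.mp hy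
    have hm1W : xm1 ∈ W := by
      rw [hgm1] at hm1
      obtain ⟨w, hw, rfl⟩ := hm1
      rw [hcomm]
      exact hWJ w hw s hsJ
    have h1W : x1 ∈ W := by
      rw [hg1'] at h1'
      obtain ⟨w, hw, rfl⟩ := h1'
      rw [hcomm]
      exact hWJ w hw t htJ
    have hzW : z ∈ W := hz.1.1
    have hrJ : xm1 + z + x1 ∈ genBy mul {a, b} := by
      have heq : xm1 + z + x1 = x - (p • s + q • oneJ + r • t) := by rw [hxeq]; abel
      rw [heq]
      exact Submodule.sub_mem _ hx (Submodule.add_mem _ (Submodule.add_mem _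
        (Submodule.smul_mem _ _ hsJ) (Submodule.smul_mem _ _ honeJ))
        (Submodule.smul_mem _ _ htJ))
    have hr0 : xm1 + z + x1 = 0 := hJW _ hrJ (add_mem (add_mem hm1W hzW) h1W)
    refine ⟨p, q, r, ?_⟩
    have hre : p • s + xm1 + (q • oneJ + z) + x1 + r • t
        = p • s + q • oneJ + r • t + (xm1 + z + x1) := by abel
    rw [hxeq, hre, hr0, add_zero]
  -- s·t = c • oneJ
  obtain ⟨σ₀, c, τ₀, hstdec⟩ := hdecJ _ (hJmul s hsJ t htJ)
  have hστ0 : σ₀ = 0 ∧ τ₀ = 0 := by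
    obtain ⟨e1, _, _, _, e5⟩ := hgind (σ₀ • s) (Submodule.smul_mem _ _ hsmem)
      0 (zero_mem _) (c • oneJ - mul s t)
      (Submodule.sub_mem _ (Submodule.smul_mem _ _ h1mem) hst0)
      0 (zero_mem _) (τ₀ • t) (Submodule.smul_mem _ _ htmem)
      (by rw [hstdec]; abel)
    constructor
    · rcases smul_eq_zero.mp e1 with h' | h'
      · exact h'
      · exact absurd h' hsNe
    · rcases smul_eq_zero.mp e5 with h' | h'
      · exact h'
      · exact absurd h' htNe
  have hst : mul s t = c • oneJ := by
    rw [hstdec, hστ0.1, hστ0.2]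
    simp
  have hts : mul t s = c • oneJ := by rw [hcomm]; exact hst
  -- multiplication of general elements of J
  have hmulJ : ∀ p q r : F, mul (p • s + q • oneJ + r • t) (p • s + q • oneJ + r • t)
      = (2 * p * q) • s + (q ^ 2 + 2 * p * r * c) • oneJ + (2 * q * r) • t := by
    intro p q r
    simp only [map_add, map_smul, LinearMap.add_apply, LinearMap.smul_apply,
      hss, htt, hst, hts, h1s, hs1, h1t, ht1, h11, smul_zero]
    module
  have h2i : (2 : F) * 2⁻¹ = 1 := mul_inv_cancel₀ hchar
  -- analysis of idempotents
  have key : ∀ p q r : F, 2 * p * q - p = 0 → q ^ 2 + 2 * p * r * c - q = 0 →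
      2 * q * r - r = 0 → ¬(p = 0 ∧ q = 0 ∧ r = 0) → ¬(p = 0 ∧ q = 1 ∧ r = 0) →
      p ≠ 0 ∧ q = 2⁻¹ ∧ r ≠ 0 ∧ p * r * c = 8⁻¹ := by
    intro p q r e1 e2 e3 hn0 hn1
    have hp : p ≠ 0 := by
      intro hp
      subst hp
      by_cases hr : r = 0
      · subst hr
        have hq01 : q * (q - 1) = 0 := by linear_combination e2
        rcases mul_eq_zero.mp hq01 with h' | h'
        · exact hn0 ⟨rfl, h', rfl⟩
        · exact hn1 ⟨rfl, sub_eq_zero.mp h', rfl⟩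
      · have hq : 2 * q = 1 := by
          have hqr : r * (2 * q - 1) = 0 := by linear_combination e3
          rcases mul_eq_zero.mp hqr with h' | h'
          · exact absurd h' hr
          · linear_combination h'
        exact one_ne_zero (α := F) (by linear_combination (2 * q - 1) * hq - 4 * e2)
    have hq : q = 2⁻¹ := by
      have hpq : p * (2 * q - 1) = 0 := by linear_combination e1
      rcases mul_eq_zero.mp hpq with h' | h'
      · exact absurd h' hp
      · have h2q : 2 * q = 1 := by linear_combination h'
        have := h2i
        linear_combination 2⁻¹ * h2q - q * this
    have hprc : p * r * c = 8⁻¹ := by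
      rw [hq] at e2
      have h8i : (8 : F) * 8⁻¹ = 1 := mul_inv_cancel₀ h8
      apply mul_left_cancel₀ h8
      rw [show (8 : F) * 8⁻¹ = 1 from h8i]
      linear_combination 4 * e2 - (2 * (2 : F)⁻¹ - 1) * h2i
    refine ⟨hp, hq, ?_, hprc⟩
    intro hr
    rw [hr] at hprc
    simp at hprc
    exact h8 hprc.symm
  obtain ⟨p, q, r, hudec⟩ := hdecJ u huJ
  obtain ⟨p', q', r', hvdec⟩ := hdecJ v hvJ
  have hueq : 2 * p * q - p = 0 ∧ q ^ 2 + 2 * p * r * c - q = 0 ∧ 2 * q * r - r = 0 := by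
    have hm := hmulJ p q r
    rw [← hudec, huu, hudec] at hm
    have hz : (2 * p * q - p) • s + (q ^ 2 + 2 * p * r * c - q) • oneJ
        + (2 * q * r - r) • t = 0 := by
      have hrw : (2 * p * q - p) • s + (q ^ 2 + 2 * p * r * c - q) • oneJ
          + (2 * q * r - r) • t
          = ((2 * p * q) • s + (q ^ 2 + 2 * p * r * c) • oneJ + (2 * q * r) • t)
            - (p • s + q • oneJ + r • t) := by module
      rw [hrw, ← hm]
      exact sub_self _
    exact hindJ _ _ _ hz
  have hveq : 2 * p' * q' - p' = 0 ∧ q' ^ 2 + 2 * p' * r' * c - q' = 0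
      ∧ 2 * q' * r' - r' = 0 := by
    have hm := hmulJ p' q' r'
    rw [← hvdec, hvv, hvdec] at hm
    have hz : (2 * p' * q' - p') • s + (q' ^ 2 + 2 * p' * r' * c - q') • oneJ
        + (2 * q' * r' - r') • t = 0 := by
      have hrw : (2 * p' * q' - p') • s + (q' ^ 2 + 2 * p' * r' * c - q') • oneJ
          + (2 * q' * r' - r') • t
          = ((2 * p' * q') • s + (q' ^ 2 + 2 * p' * r' * c) • oneJ + (2 * q' * r') • t)
            - (p' • s + q' • oneJ + r' • t) := by module
      rw [hrw, ← hm]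
      exact sub_self _
    exact hindJ _ _ _ hz
  have hun0 : ¬(p = 0 ∧ q = 0 ∧ r = 0) := by
    rintro ⟨rfl, rfl, rfl⟩
    apply hu0
    rw [hudec]; simp
  have hun1 : ¬(p = 0 ∧ q = 1 ∧ r = 0) := by
    rintro ⟨rfl, rfl, rfl⟩
    apply hu1
    rw [hudec]; simp
  have hvn0 : ¬(p' = 0 ∧ q' = 0 ∧ r' = 0) := by
    rintro ⟨rfl, rfl, rfl⟩
    apply hv0
    rw [hvdec]; simp
  have hvn1 : ¬(p' = 0 ∧ q' = 1 ∧ r' = 0) := by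
    rintro ⟨rfl, rfl, rfl⟩
    apply hv1
    rw [hvdec]; simp
  obtain ⟨hp, hq, hr, hprc⟩ := key p q r hueq.1 hueq.2.1 hueq.2.2 hun0 hun1
  obtain ⟨hp', hq', hr', hprc'⟩ := key p' q' r' hveq.1 hveq.2.1 hveq.2.2 hvn0 hvn1
  have hc : c ≠ 0 := by
    intro h
    rw [h, mul_zero] at hprc
    exact (inv_ne_zero h8) hprc.symm
  have hpr : p * r = p' * r' := by
    have h' : p * r * c = p' * r' * c := hprc.trans hprc'.symm
    exact mul_right_cancel₀ hc h'
  obtain ⟨ξ, hξ2⟩ := IsAlgClosed.exists_pow_nat_eq (p * p'⁻¹) (n := 2) (by norm_num)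
  have hξ : ξ ≠ 0 := by
    intro h
    apply mul_ne_zero hp (inv_ne_zero hp')
    rw [← hξ2, h]
    ring
  obtain ⟨φ, hφ⟩ := exists_phi g hbot hgsum hgind ξ
  refine ⟨ξ, hξ, φ, hφ, ?_⟩
  have hφ1 : φ (p • s) = ξ ^ (-2 : ℤ) • (p • s) := hφ (-2) _ (Submodule.smul_mem _ _ hsmem)
  have hφ2 : φ (q • oneJ) = ξ ^ (0 : ℤ) • (q • oneJ) := hφ 0 _ (Submodule.smul_mem _ _ h1mem)
  have hφ3 : φ (r • t) = ξ ^ (2 : ℤ) • (r • t) := hφ 2 _ (Submodule.smul_mem _ _ htmem)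
  have hzm2 : ξ ^ (-2 : ℤ) = (ξ ^ 2)⁻¹ := by
    rw [zpow_neg]
    norm_cast
  have hzp2 : ξ ^ (2 : ℤ) = ξ ^ 2 := by norm_cast
  have e1' : (ξ ^ 2)⁻¹ * p = p' := by
    rw [hξ2]
    field_simp
  have e2' : ξ ^ 2 * r = r' := by
    rw [hξ2]
    field_simp
    linear_combination hpr
  rw [hudec, map_add, map_add, hφ1, hφ2, hφ3, hvdec]
  rw [zpow_zero, one_smul, smul_smul, smul_smul, hzm2, hzp2, e1', e2', hq, ← hq']
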